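/- Let α ∈ [0,1), R > 0 and λ₁, λ₂ > 0 with λ₁ ≠ λ₂. If U_{λ₁,α} and U_{λ₂,α} take the same value at some point x₀ ∈ ℝ² with |x₀| = R, then ∫_{B_R(0)} ( |x|^{-2α} e^{U_{λ₁,α}(x)} + |x|^{-2α} e^{U_{λ₂,α}(x)} ) dx = 8π(1−α), where the integral is with respect to two-dimensional Lebesgue measure on the open ball B_R(0) ⊂ ℝ². -/

import Mathlib

open Real MeasureTheory Metric Filter Topology RealInnerProductSpace

noncomputable section

/-- The plane `ℝ²`. -/
abbrev Pl := EuclideanSpace ℝ (Fin 2)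

/-- The Laplacian `Δu = ∂²u/∂x₁² + ∂²u/∂x₂²` of a function on `ℝ²`. -/
def lap (u : Pl → ℝ) (x : Pl) : ℝ :=
  ∑ i : Fin 2, fderiv ℝ (fun y => fderiv ℝ u y (EuclideanSpace.single i 1)) x
    (EuclideanSpace.single i 1)

/-- The radial profile of `U_{λ,α}`. -/
def Uval (lam a r : ℝ) : ℝ :=
  Real.log ((lam * (1 - a)) ^ 2 / (1 + lam ^ 2 / 8 * r ^ (2 * (1 - a))) ^ 2)

/-- `U_{λ,α}(x) = ln( (λ(1−α))² / (1 + (λ²/8)|x|^{2(1−α)})² )`. -/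
def U (lam a : ℝ) (x : Pl) : ℝ := Uval lam a ‖x‖

open Set intervalIntegral

lemma exp_Uval (lam a r : ℝ) (hl : 0 < lam) (ha1 : a < 1) (hr : 0 ≤ r) :
    Real.exp (Uval lam a r) = (lam*(1-a))^2 / (1 + lam^2/8 * r ^ (2*(1-a)))^2 := by
  have hb : 0 < 1 - a := by linarith
  have hd : 0 < 1 + lam^2/8 * r ^ (2*(1-a)) := by positivity
  rw [Uval, Real.exp_log (div_pos (pow_pos (mul_pos hl hb) 2) (pow_pos hd 2))]

lemma rpow_key (a : ℝ) {r : ℝ} (hr : 0 < r) : r * r ^ (-(2*a)) = r ^ (2*(1-a) - 1) := by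
  calc r * r ^ (-(2*a)) = r ^ (1:ℝ) * r ^ (-(2*a)) := by rw [Real.rpow_one]
  _ = r ^ ((1:ℝ) + -(2*a)) := (Real.rpow_add hr _ _).symm
  _ = r ^ (2*(1-a) - 1) := by rw [show (1:ℝ) + -(2*a) = 2*(1-a) - 1 from by ring]

lemma hasDerivF (lam a : ℝ) (hl : 0 < lam) (ha1 : a < 1) {r : ℝ} (hr : 0 < r) :
    HasDerivAt (fun t : ℝ => -(4*(1-a)) / (1 + lam^2/8 * t ^ (2*(1-a))))
      (r * (r ^ (-(2*a)) * Real.exp (Uval lam a r))) r := by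
  have hb : 0 < 1 - a := by linarith
  have hd : HasDerivAt (fun t : ℝ => 1 + lam^2/8 * t ^ (2*(1-a)))
      (lam^2/8 * (2*(1-a) * r ^ (2*(1-a) - 1))) r :=
    ((Real.hasDerivAt_rpow_const (p := 2*(1-a)) (Or.inl hr.ne')).const_mul _).const_add 1
  have hden : (1 + lam^2/8 * r ^ (2*(1-a))) ≠ 0 := by positivity
  have H : HasDerivAt (fun t : ℝ => -(4*(1-a)) / (1 + lam^2/8 * t ^ (2*(1-a)))) _ r :=
    (hasDerivAt_const r (-(4*(1-a)))).div hd hden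
  convert H using 1
  rw [exp_Uval lam a r hl ha1 hr.le, ← mul_assoc, rpow_key a hr]
  field_simp
  ring

lemma reduce (R : ℝ) (g : ℝ → ℝ) :
    ∫ x in ball (0:Pl) R, g ‖x‖ = 2 * π * ∫ y in Ioo (0:ℝ) R, y * g y := by
  have h1 : ∫ x in ball (0:Pl) R, g ‖x‖ = ∫ x : Pl, Set.indicator (Iio R) g ‖x‖ := by
    rw [← MeasureTheory.integral_indicator measurableSet_ball]
    congr 1; ext x
    by_cases hx : ‖x‖ < R
    · simp [Set.indicator_apply, hx, mem_ball_zero_iff]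
    · simp [Set.indicator_apply, hx, mem_ball_zero_iff]
  rw [h1, integral_fun_norm_addHaar volume (fun r => Set.indicator (Iio R) g r)]
  have hdim : Module.finrank ℝ Pl = 2 := by simp [finrank_euclideanSpace]
  rw [hdim]
  have hvol : volume.real (ball (0:Pl) 1) = π := by
    rw [measureReal_def, EuclideanSpace.volume_ball]
    norm_num [Real.Gamma_two, Real.sq_sqrt Real.pi_pos.le, ENNReal.toReal_ofReal Real.pi_pos.le]
  rw [hvol]
  have h2 : ∫ y in Ioi (0:ℝ), y ^ (2-1) • Set.indicator (Iio R) g y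
      = ∫ y in Ioo (0:ℝ) R, y * g y := by
    norm_num [smul_eq_mul]
    have : ∀ y : ℝ, y * Set.indicator (Iio R) g y = Set.indicator (Iio R) (fun y => y * g y) y := by
      intro y; by_cases hy : y ∈ Iio R <;> simp [Set.indicator_apply, hy]
    rw [funext this]
    rw [MeasureTheory.integral_indicator measurableSet_Iio, Measure.restrict_restrict measurableSet_Iio,
      Set.Iio_inter_Ioi]
  rw [h2]
  rw [smul_eq_mul, nsmul_eq_mul]
  push_cast
  ring

lemma oneD (a R lam1 lam2 : ℝ) (ha : 0 ≤ a) (ha1 : a < 1) (hR : 0 < R)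
    (h1 : 0 < lam1) (h2 : 0 < lam2) :
    ∫ y in Ioo (0:ℝ) R,
        y * (y ^ (-(2*a)) * Real.exp (Uval lam1 a y) + y ^ (-(2*a)) * Real.exp (Uval lam2 a y))
      = (4*(1-a) - 4*(1-a) / (1 + lam1^2/8 * R^(2*(1-a))))
        + (4*(1-a) - 4*(1-a) / (1 + lam2^2/8 * R^(2*(1-a)))) := by
  have hb : 0 < 1 - a := by linarith
  set F : ℝ → ℝ := fun t => -(4*(1-a)) / (1 + lam1^2/8 * t ^ (2*(1-a)))
      + -(4*(1-a)) / (1 + lam2^2/8 * t ^ (2*(1-a))) with hF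
  set h' : ℝ → ℝ := fun y =>
      y * (y ^ (-(2*a)) * Real.exp (Uval lam1 a y) + y ^ (-(2*a)) * Real.exp (Uval lam2 a y))
      with hh'
  have hrpc : Continuous fun t : ℝ => t ^ (2*(1-a)) :=
    continuous_iff_continuousAt.2 fun x => Real.continuousAt_rpow_const x _ (Or.inr (by positivity))
  have hcont : ContinuousOn F (Icc 0 R) := by
    apply ContinuousOn.add <;>
    · apply ContinuousOn.div continuousOn_const
        ((continuous_const.add (continuous_const.mul hrpc)).continuousOn)
      intro x hx
      have : (0:ℝ) ≤ x := hx.1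
      simp only [Pi.add_apply, Pi.mul_apply]; positivity
  have hderiv : ∀ y ∈ Ioo (0:ℝ) R, HasDerivWithinAt F (h' y) (Ioi y) y := by
    intro y hy
    have : HasDerivAt (fun t : ℝ => -(4*(1-a)) / (1 + lam1^2/8 * t ^ (2*(1-a)))
        + -(4*(1-a)) / (1 + lam2^2/8 * t ^ (2*(1-a)))) _ y :=
      ((hasDerivF lam1 a h1 ha1 hy.1).add (hasDerivF lam2 a h2 ha1 hy.1))
    have h2' : HasDerivAt F (h' y) y := by convert this using 1; simp [hh']; ring
    exact h2'.hasDerivWithinAt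
  have hint : IntervalIntegrable h' volume 0 R := by
    have hg : IntervalIntegrable
        (fun y : ℝ => ((lam1*(1-a))^2 + (lam2*(1-a))^2) * y ^ (2*(1-a) - 1)) volume 0 R :=
      (intervalIntegrable_rpow' (by linarith)).const_mul _
    apply hg.mono_fun'
    · rw [uIoc_of_le hR.le]
      refine ContinuousOn.aestronglyMeasurable ?_ measurableSet_Ioc
      have hexp : ∀ lam : ℝ, 0 < lam →
          ContinuousOn (fun y : ℝ => Real.exp (Uval lam a y)) (Ioc 0 R) := by
        intro lam hl
        have hfrac : ContinuousOn
            (fun y : ℝ => (lam*(1-a))^2 / (1 + lam^2/8 * y^(2*(1-a)))^2) (Ioc 0 R) := by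
          apply continuousOn_const.div
            (((continuous_const.add (continuous_const.mul hrpc)).pow 2).continuousOn)
          intro x hx
          have hx0 : (0:ℝ) ≤ x := hx.1.le
          simp only [Pi.add_apply, Pi.mul_apply, Pi.pow_apply]; positivity
        have hlog : ContinuousOn (fun y : ℝ => Uval lam a y) (Ioc 0 R) := by
          simp only [Uval]
          apply hfrac.log
          intro x hx
          have hx0 : (0:ℝ) ≤ x := hx.1.le
          positivity
        exact Real.continuous_exp.comp_continuousOn hlog
      apply ContinuousOn.mul continuousOn_id
      exact ((continuousOn_id.rpow_const fun x hx => Or.inl hx.1.ne').mul (hexp lam1 h1)).add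
        ((continuousOn_id.rpow_const fun x hx => Or.inl hx.1.ne').mul (hexp lam2 h2))
    · rw [uIoc_of_le hR.le]
      refine (ae_restrict_iff' measurableSet_Ioc).2 (ae_of_all _ fun y hy => ?_)
      have hy0 : 0 < y := hy.1
      have hval : h' y = y ^ (2*(1-a) - 1) *
          ((lam1*(1-a))^2 / (1 + lam1^2/8 * y ^ (2*(1-a)))^2
            + (lam2*(1-a))^2 / (1 + lam2^2/8 * y ^ (2*(1-a)))^2) := by
        simp only [hh']
        rw [exp_Uval lam1 a y h1 ha1 hy0.le, exp_Uval lam2 a y h2 ha1 hy0.le,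
          ← rpow_key a hy0]
        ring
      have hd1 : (1:ℝ) ≤ (1 + lam1^2/8 * y ^ (2*(1-a)))^2 := by
        have : (0:ℝ) ≤ lam1^2/8 * y ^ (2*(1-a)) := by positivity
        nlinarith
      have hd2 : (1:ℝ) ≤ (1 + lam2^2/8 * y ^ (2*(1-a)))^2 := by
        have : (0:ℝ) ≤ lam2^2/8 * y ^ (2*(1-a)) := by positivity
        nlinarith
      have hnn : 0 ≤ h' y := by
        rw [hval]; positivity
      simp only [Real.norm_eq_abs, abs_of_nonneg hnn]
      rw [hval]
      rw [mul_comm]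
      apply mul_le_mul_of_nonneg_right
        (add_le_add (div_le_self (by positivity) hd1) (div_le_self (by positivity) hd2))
        (Real.rpow_nonneg hy0.le _)
  have hFTC : ∫ y in (0:ℝ)..R, h' y = F R - F 0 :=
    integral_eq_sub_of_hasDeriv_right_of_le hR.le hcont hderiv hint
  rw [intervalIntegral.integral_of_le hR.le, integral_Ioc_eq_integral_Ioo] at hFTC
  rw [hFTC, hF]
  simp only [Real.zero_rpow (by positivity : (2*(1-a)) ≠ 0)]
  ring

lemma alg (a R lam1 lam2 : ℝ) (ha1 : a < 1) (hR : 0 < R) (h1 : 0 < lam1) (h2 : 0 < lam2)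
    (hne : lam1 ≠ lam2) (heq : Uval lam1 a R = Uval lam2 a R) :
    (lam1^2/8 * R^(2*(1-a))) * (lam2^2/8 * R^(2*(1-a))) = 1 := by
  set T := R ^ (2*(1-a)) with hT
  have hT0 : 0 < T := Real.rpow_pos_of_pos hR _
  have hb : 0 < 1 - a := by linarith
  have hd1 : 0 < 1 + lam1^2/8*T := by positivity
  have hd2 : 0 < 1 + lam2^2/8*T := by positivity
  have hE : (lam1*(1-a))^2/(1+lam1^2/8*T)^2 = (lam2*(1-a))^2/(1+lam2^2/8*T)^2 := by
    have := congrArg Real.exp heq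
    rwa [exp_Uval _ _ _ h1 ha1 hR.le, exp_Uval _ _ _ h2 ha1 hR.le] at this
  have hEE := (div_eq_div_iff (by positivity) (by positivity)).1 hE
  have hcross : (lam1*(1+lam2^2/8*T))^2 = (lam2*(1+lam1^2/8*T))^2 := by
    have hbne : (1-a) ≠ 0 := hb.ne'
    have h' : (lam1*(1+lam2^2/8*T))^2 * (1-a)^2 = (lam2*(1+lam1^2/8*T))^2 * (1-a)^2 := by
      linear_combination hEE
    exact mul_right_cancel₀ (pow_ne_zero 2 hbne) h'
  have hlin : lam1*(1+lam2^2/8*T) = lam2*(1+lam1^2/8*T) := by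
    have hp1 : (0:ℝ) ≤ lam1*(1+lam2^2/8*T) := by positivity
    have hp2 : (0:ℝ) ≤ lam2*(1+lam1^2/8*T) := by positivity
    have := congrArg Real.sqrt hcross
    rwa [Real.sqrt_sq hp1, Real.sqrt_sq hp2] at this
  have hzero : (lam1 - lam2) * (lam1*lam2*T/8 - 1) = 0 := by linear_combination (-1:ℝ) * hlin
  rcases mul_eq_zero.1 hzero with h | h
  · exact absurd (sub_eq_zero.1 h) hne
  · have hx : lam1*lam2*T/8 = 1 := by linarith [sub_eq_zero.1 h]
    linear_combination (lam1*lam2*T/8 + 1) * (sub_eq_zero.1 h)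

/-- If `U_{λ₁,α}` and `U_{λ₂,α}` (with `λ₁ ≠ λ₂`) agree at a point of norm `R`,
then the sum of their masses on `B_R(0)` is `8π(1−α)`. -/
theorem bubble_mass_sum (a R lam1 lam2 : ℝ) (ha : a ∈ Set.Ico (0:ℝ) 1) (hR : 0 < R)
    (h1 : 0 < lam1) (h2 : 0 < lam2) (hne : lam1 ≠ lam2)
    (x0 : Pl) (hx0 : ‖x0‖ = R) (heq : U lam1 a x0 = U lam2 a x0) :
    ∫ x in ball (0 : Pl) R,
        (‖x‖ ^ (-(2*a)) * Real.exp (U lam1 a x) + ‖x‖ ^ (-(2*a)) * Real.exp (U lam2 a x))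
      = 8 * π * (1 - a) := by
  obtain ⟨ha0, ha1⟩ := ha
  have hb : 0 < 1 - a := by linarith
  have hUeq : Uval lam1 a R = Uval lam2 a R := by rw [← hx0]; exact heq
  have hprod := alg a R lam1 lam2 ha1 hR h1 h2 hne hUeq
  have hred := reduce R (fun r : ℝ => r ^ (-(2*a)) * Real.exp (Uval lam1 a r)
      + r ^ (-(2*a)) * Real.exp (Uval lam2 a r))
  have h1d := oneD a R lam1 lam2 ha0 ha1 hR h1 h2
  have hgoal : (∫ x in ball (0 : Pl) R,
        (‖x‖ ^ (-(2*a)) * Real.exp (U lam1 a x) + ‖x‖ ^ (-(2*a)) * Real.exp (U lam2 a x)))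
      = ∫ x in ball (0:Pl) R, (fun r : ℝ => r ^ (-(2*a)) * Real.exp (Uval lam1 a r)
      + r ^ (-(2*a)) * Real.exp (Uval lam2 a r)) ‖x‖ := rfl
  rw [hgoal, hred]
  have hbeta : (∫ y in Ioo (0:ℝ) R, y * (fun r : ℝ => r ^ (-(2*a)) * Real.exp (Uval lam1 a r)
      + r ^ (-(2*a)) * Real.exp (Uval lam2 a r)) y)
      = ∫ y in Ioo (0:ℝ) R,
        y * (y ^ (-(2*a)) * Real.exp (Uval lam1 a y) + y ^ (-(2*a)) * Real.exp (Uval lam2 a y)) :=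
    rfl
  rw [hbeta, h1d]
  have hp1 : (0:ℝ) < 1 + lam1^2/8 * R^(2*(1-a)) := by
    have : (0:ℝ) ≤ R := hR.le; positivity
  have hp2 : (0:ℝ) < 1 + lam2^2/8 * R^(2*(1-a)) := by
    have : (0:ℝ) ≤ R := hR.le; positivity
  field_simp
  linear_combination 512 * hprod

end
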